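/- Let q be a prime power. If α ∈ F_{q^2} is a primitive element, then α is normal over F_q, i.e., {α, α^q} is an F_q-basis of F_{q^2}. -/

import Mathlib

open Polynomial

/-- An element of a finite field `E` is primitive if it generates the cyclic group `Eˣ`,
i.e. its multiplicative order is `|E| - 1`. -/
def IsPrimitiveElem {E : Type*} [Field E] [Fintype E] (α : E) : Prop :=
  orderOf α = Fintype.card E - 1

/-- An element `g` of a degree-`n` extension `E` of a finite field `F` is normal over `F`
if `g, g^q, …, g^(q^(n-1))` (with `q = |F|`) is an `F`-basis of `E`. -/
def IsNormalElem (F : Type*) {E : Type*} [Field F] [Field E] [Algebra F E] [Fintype F]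
    (n : ℕ) (g : E) : Prop :=
  ∃ b : Module.Basis (Fin n) F E, ∀ i : Fin n, b i = g ^ Fintype.card F ^ (i : ℕ)

theorem stmt_11 (q : ℕ) (hq : IsPrimePow q)
    (F E : Type) [Field F] [Field E] [Algebra F E] [Fintype F] [Fintype E]
    (hF : Fintype.card F = q) (hE : Fintype.card E = q ^ 2)
    (α : E) (hα : IsPrimitiveElem α) :
    IsNormalElem F 2 α := by
  have hq2 : 2 ≤ q := hq.two_le
  have hord : orderOf α = q ^ 2 - 1 := by rw [hα, hE]
  have hq21 : 1 < q ^ 2 := by nlinarith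
  have hordpos : 0 < orderOf α := by rw [hord]; omega
  have hα0 : α ≠ 0 := by
    have : IsOfFinOrder α := orderOf_pos_iff.mp hordpos
    exact this.isUnit.ne_zero
  -- finrank = 2
  have hcard : Fintype.card E = Fintype.card F ^ Module.finrank F E := Module.card_eq_pow_finrank
  have hfr : Module.finrank F E = 2 := by
    rw [hE, hF] at hcard
    exact (Nat.pow_right_injective hq2 hcard.symm)
  -- linear independence of ![α, α^q]
  set v : Fin 2 → E := ![α, α ^ Fintype.card F] with hv
  have hli : LinearIndependent F v := by
    rw [linearIndependent_fin2]
    constructor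
    · simp [hv, pow_ne_zero, hα0]
    · intro a ha
      simp only [hv, Matrix.cons_val_one, Matrix.head_cons, Matrix.cons_val_zero] at ha
      have ha0 : a ≠ 0 := by
        rintro rfl
        rw [zero_smul] at ha
        exact hα0 ha.symm
      set c : E := algebraMap F E a with hc
      have hA0 : c ≠ 0 := by
        simpa [hc] using (map_ne_zero (algebraMap F E)).mpr ha0
      have hq1 : 1 ≤ Fintype.card F := Fintype.card_pos
      have key : c * α ^ (Fintype.card F - 1) = 1 := by
        have h' : c * α ^ (Fintype.card F - 1) * α = 1 * α := by
          rw [one_mul, mul_assoc, ← pow_succ, Nat.sub_add_cancel hq1]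
          simpa [Algebra.smul_def] using ha
        exact mul_right_cancel₀ hα0 h'
      have hcpow : c ^ (Fintype.card F - 1) = 1 := by
        rw [hc, ← map_pow, FiniteField.pow_card_sub_one_eq_one a ha0, map_one]
      have hαpow : α ^ ((Fintype.card F - 1) * (Fintype.card F - 1)) = 1 := by
        calc α ^ ((Fintype.card F - 1) * (Fintype.card F - 1))
            = (α ^ (Fintype.card F - 1)) ^ (Fintype.card F - 1) := by rw [pow_mul]
          _ = (c * α ^ (Fintype.card F - 1)) ^ (Fintype.card F - 1) := by
              rw [mul_pow, hcpow, one_mul]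
          _ = 1 := by rw [key, one_pow]
      have hdvd : orderOf α ∣ (Fintype.card F - 1) * (Fintype.card F - 1) :=
        orderOf_dvd_of_pow_eq_one hαpow
      rw [hord, hF] at hdvd
      have hpos : 0 < (q - 1) * (q - 1) := by
        have : 1 ≤ q - 1 := by omega
        nlinarith
      have hle : q ^ 2 - 1 ≤ (q - 1) * (q - 1) := Nat.le_of_dvd hpos hdvd
      have h1 : 1 ≤ q := by omega
      zify [h1, le_of_lt hq21] at hle
      nlinarith
  refine ⟨basisOfLinearIndependentOfCardEqFinrank hli (by simp [hfr]), fun i => ?_⟩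
  rw [coe_basisOfLinearIndependentOfCardEqFinrank]
  fin_cases i <;> simp [hv]
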